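/- Let 0 < φ_1 ≤ ⋯ ≤ φ_m, integers 1 ≤ k_a, k_d ≤ m, and let f(α) = Σ of the (m − k_d) smallest values of {α_l φ_l} over F = {α : 0 ≤ α_i ≤ 1, Σ α_i = k_a}. Then there exists a maximizer α* of f over F and indices s, r with 1 ≤ s ≤ max(k_a, m − k_d) and 0 ≤ r ≤ s − 1 such that: α*_m φ_m = ⋯ = α*_s φ_s > α*_{s−1} φ_{s−1} ≥ ⋯ ≥ α*_{s−r} φ_{s−r}, and α*_{s−r−1} = ⋯ = α*_1 = 0. -/

import Mathlib

open Finset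

section part2

variable {m : ℕ}

private def SIco (m : ℕ) (lo hi : ℕ) (F : Fin m → ℝ) : ℝ :=
  ∑ i ∈ Finset.univ.filter (fun i : Fin m => lo ≤ (i:ℕ) ∧ (i:ℕ) < hi), F i

private lemma card_filter_Ico (lo hi : ℕ) (h2 : hi ≤ m) :
    (Finset.univ.filter fun i : Fin m => lo ≤ (i:ℕ) ∧ (i:ℕ) < hi).card = hi - lo := by
  have himg : (Finset.univ.filter fun i : Fin m => lo ≤ (i:ℕ) ∧ (i:ℕ) < hi).image (fun i : Fin m => (i:ℕ))
      = Finset.Ico lo hi := by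
    ext n
    simp only [Finset.mem_image, Finset.mem_filter, Finset.mem_univ, true_and, Finset.mem_Ico]
    constructor
    · rintro ⟨i, ⟨h1, h2⟩, rfl⟩; exact ⟨h1, h2⟩
    · rintro ⟨h1, hn⟩
      exact ⟨⟨n, lt_of_lt_of_le hn h2⟩, ⟨h1, hn⟩, rfl⟩
  have := Finset.card_image_of_injective
    (Finset.univ.filter fun i : Fin m => lo ≤ (i:ℕ) ∧ (i:ℕ) < hi) (Fin.val_injective)
  rw [himg] at this
  rw [← this, Nat.card_Ico]

private lemma SIco_split (lo mid hi : ℕ) (F : Fin m → ℝ) (h1 : lo ≤ mid) (h2 : mid ≤ hi) :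
    SIco m lo hi F = SIco m lo mid F + SIco m mid hi F := by
  unfold SIco
  rw [← Finset.sum_filter_add_sum_filter_not
    (Finset.univ.filter fun i : Fin m => lo ≤ (i:ℕ) ∧ (i:ℕ) < hi) (fun i => (i:ℕ) < mid)]
  congr 1
  · congr 1
    ext i
    simp only [Finset.mem_filter, Finset.mem_univ, true_and]
    omega
  · congr 1
    ext i
    simp only [Finset.mem_filter, Finset.mem_univ, true_and]
    omega

private lemma SIco_congr (lo hi : ℕ) (F G : Fin m → ℝ)
    (h : ∀ i : Fin m, lo ≤ (i:ℕ) → (i:ℕ) < hi → F i = G i) :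
    SIco m lo hi F = SIco m lo hi G := by
  unfold SIco
  apply Finset.sum_congr rfl
  intro i hi'
  simp only [Finset.mem_filter, Finset.mem_univ, true_and] at hi'
  exact h i hi'.1 hi'.2

private lemma SIco_mono (lo hi : ℕ) (F G : Fin m → ℝ)
    (h : ∀ i : Fin m, lo ≤ (i:ℕ) → (i:ℕ) < hi → F i ≤ G i) :
    SIco m lo hi F ≤ SIco m lo hi G := by
  unfold SIco
  apply Finset.sum_le_sum
  intro i hi'
  simp only [Finset.mem_filter, Finset.mem_univ, true_and] at hi'
  exact h i hi'.1 hi'.2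

private lemma SIco_const (lo hi : ℕ) (v : ℝ) (h2 : hi ≤ m) :
    SIco m lo hi (fun _ => v) = ((hi - lo : ℕ) : ℝ) * v := by
  unfold SIco
  rw [Finset.sum_const, card_filter_Ico lo hi h2, nsmul_eq_mul]

private lemma SIco_univ (F : Fin m → ℝ) : SIco m 0 m F = ∑ i, F i := by
  unfold SIco
  apply Finset.sum_congr _ (fun _ _ => rfl)
  ext i
  simp only [Finset.mem_filter, Finset.mem_univ, true_and, iff_true]
  exact ⟨Nat.zero_le _, i.isLt⟩

private lemma SIco_nonneg (lo hi : ℕ) (F : Fin m → ℝ) (h : ∀ i, 0 ≤ F i) :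
    0 ≤ SIco m lo hi F :=
  Finset.sum_nonneg fun i _ => h i

private lemma SIco_empty (lo hi : ℕ) (F : Fin m → ℝ) (h : m ≤ lo) : SIco m lo hi F = 0 := by
  unfold SIco
  apply Finset.sum_eq_zero
  intro i hi'
  simp only [Finset.mem_filter, Finset.mem_univ, true_and] at hi'
  exact absurd (lt_of_lt_of_le i.isLt h) (by omega)

private lemma SIco_step (t hi : ℕ) (ht : t < m) (hthi : t < hi) (F : Fin m → ℝ) :
    SIco m t hi F = F ⟨t, ht⟩ + SIco m (t+1) hi F := by
  unfold SIco
  have : (Finset.univ.filter fun i : Fin m => t ≤ (i:ℕ) ∧ (i:ℕ) < hi)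
      = insert ⟨t, ht⟩ (Finset.univ.filter fun i : Fin m => t+1 ≤ (i:ℕ) ∧ (i:ℕ) < hi) := by
    ext i
    simp only [Finset.mem_insert, Finset.mem_filter, Finset.mem_univ, true_and, Fin.ext_iff]
    omega
  rw [this, Finset.sum_insert]
  simp only [Finset.mem_filter, Finset.mem_univ, true_and, Fin.val_mk]
  omega

private lemma SIco_add (lo hi : ℕ) (F G : Fin m → ℝ) :
    SIco m lo hi (fun i => F i + G i) = SIco m lo hi F + SIco m lo hi G := by
  unfold SIco; rw [Finset.sum_add_distrib]

private lemma SIco_smul (lo hi : ℕ) (c : ℝ) (F : Fin m → ℝ) :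
    SIco m lo hi (fun i => F i * c) = SIco m lo hi F * c := by
  unfold SIco; rw [Finset.sum_mul]

private lemma SIco_sub (lo hi : ℕ) (F G : Fin m → ℝ) :
    SIco m lo hi (fun i => F i - G i) = SIco m lo hi F - SIco m lo hi G := by
  unfold SIco; rw [Finset.sum_sub_distrib]

private lemma sum_castLE (k : ℕ) (hk : k ≤ m) (G : Fin m → ℝ) :
    SIco m 0 k G = ∑ j : Fin k, G (Fin.castLE hk j) := by
  unfold SIco
  have himg : Finset.univ.filter (fun i : Fin m => 0 ≤ (i:ℕ) ∧ (i:ℕ) < k)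
      = Finset.image (Fin.castLE hk) Finset.univ := by
    ext i
    simp only [Finset.mem_image, Finset.mem_univ, true_and, Finset.mem_filter, Nat.zero_le]
    constructor
    · intro hlt
      exact ⟨⟨(i:ℕ), hlt⟩, Fin.ext rfl⟩
    · rintro ⟨j, rfl⟩
      exact j.isLt
  rw [himg, Finset.sum_image (fun x _ y _ h => Fin.castLE_injective hk h)]


private lemma le_val_of_strictMono {k : ℕ} (f : Fin k → Fin m) (hf : StrictMono f) :
    ∀ i : Fin k, (i : ℕ) ≤ (f i : ℕ) := by
  intro i
  obtain ⟨iv, hiv⟩ := i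
  induction iv with
  | zero => exact Nat.zero_le _
  | succ n ih =>
    have hn : n < k := by omega
    have hlt : (⟨n, hn⟩ : Fin k) < (⟨n+1, hiv⟩ : Fin k) := by
      simp [Fin.lt_def]
    have h1 := hf hlt
    have h2 := ih hn
    have h3 := Fin.lt_def.mp h1
    simp only [Fin.val_mk] at h2 h3 ⊢
    omega

private lemma sum_subset_ge_prefix (k : ℕ) (hk : k ≤ m) (p : Fin m → ℝ) (hp : Monotone p)
    (T : Finset (Fin m)) (hT : T.card = k) :
    SIco m 0 k p ≤ ∑ l ∈ T, p l := by
  have himg : T = Finset.image (fun j => T.orderEmbOfFin hT j) Finset.univ := by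
    ext x
    simp only [Finset.mem_image, Finset.mem_univ, true_and]
    constructor
    · intro hx
      have : x ∈ Set.range (T.orderEmbOfFin hT) := by
        rw [Finset.range_orderEmbOfFin]; exact hx
      obtain ⟨j, hj⟩ := this
      exact ⟨j, hj⟩
    · rintro ⟨j, rfl⟩
      exact Finset.orderEmbOfFin_mem T hT j
  rw [sum_castLE k hk p]
  conv_rhs => rw [himg]
  rw [Finset.sum_image (fun x _ y _ h => (T.orderEmbOfFin hT).injective h)]
  apply Finset.sum_le_sum
  intro j _
  apply hp
  rw [Fin.le_def]
  exact le_val_of_strictMono _ (T.orderEmbOfFin hT).strictMono j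

private lemma inf'_powersetCard_monotone (k : ℕ) (hk : k ≤ m) (p : Fin m → ℝ) (hp : Monotone p)
    (hne : ((Finset.univ : Finset (Fin m)).powersetCard k).Nonempty) :
    (Finset.univ.powersetCard k).inf' hne (fun T => ∑ l ∈ T, p l) = SIco m 0 k p := by
  apply le_antisymm
  · apply Finset.inf'_le
    rw [Finset.mem_powersetCard_univ]
    exact card_filter_Ico 0 k hk
  · apply Finset.le_inf'
    intro T hTmem
    rw [Finset.mem_powersetCard_univ] at hTmem
    exact sum_subset_ge_prefix k hk p hp T hTmem

private lemma inf'_le_weighted (k : ℕ) (hk : k ≤ m) (p μ : Fin m → ℝ)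
    (hp : ∀ i, 0 ≤ p i) (hμ0 : ∀ i, 0 ≤ μ i) (hμ1 : ∀ i, μ i ≤ 1)
    (hμs : ∑ i, μ i = (k:ℝ))
    (hne : ((Finset.univ : Finset (Fin m)).powersetCard k).Nonempty) :
    (Finset.univ.powersetCard k).inf' hne (fun T => ∑ l ∈ T, p l) ≤ ∑ i, μ i * p i := by
  rcases Nat.eq_zero_or_pos k with hk0 | hkpos
  · subst hk0
    have h1 : (Finset.univ.powersetCard 0).inf' hne (fun T => ∑ l ∈ T, p l) ≤ 0 := by
      have : (∅ : Finset (Fin m)) ∈ Finset.univ.powersetCard 0 := by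
        rw [Finset.mem_powersetCard_univ]; simp
      calc _ ≤ ∑ l ∈ (∅ : Finset (Fin m)), p l := Finset.inf'_le _ this
        _ = 0 := Finset.sum_empty
    exact le_trans h1 (Finset.sum_nonneg fun i _ => mul_nonneg (hμ0 i) (hp i))
  · set σ := Tuple.sort p with hσ
    set q : Fin m → ℝ := fun i => p (σ i) with hq
    have mq : Monotone q := Tuple.monotone_sort p
    set ν : Fin m → ℝ := fun i => μ (σ i) with hν
    have hνs : ∑ i, ν i = (k:ℝ) := by
      rw [hν, ← hμs]
      exact Equiv.sum_comp σ μ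
    have hsum : ∑ i, ν i * q i = ∑ i, μ i * p i := by
      rw [hν, hq]
      exact Equiv.sum_comp σ (fun i => μ i * p i)
    -- the chosen subset
    set T : Finset (Fin m) := Finset.image (fun j : Fin k => σ (Fin.castLE hk j)) Finset.univ with hT
    have hinj : Function.Injective (fun j : Fin k => σ (Fin.castLE hk j)) :=
      σ.injective.comp (Fin.castLE_injective hk)
    have hTcard : T.card = k := by
      rw [hT, Finset.card_image_of_injective _ hinj, Finset.card_univ, Fintype.card_fin]
    have hTmem : T ∈ Finset.univ.powersetCard k := by
      rw [Finset.mem_powersetCard_univ]; exact hTcard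
    have step1 : (Finset.univ.powersetCard k).inf' hne (fun T => ∑ l ∈ T, p l)
        ≤ ∑ l ∈ T, p l := Finset.inf'_le _ hTmem
    have step2 : ∑ l ∈ T, p l = SIco m 0 k q := by
      rw [hT, Finset.sum_image (fun x _ y _ h => hinj h), sum_castLE k hk q]
    -- core inequality
    have hkm1 : k - 1 < m := by omega
    set Λ : ℝ := q ⟨k-1, hkm1⟩ with hΛ
    have key : SIco m 0 k q ≤ ∑ i, ν i * q i := by
      have e0 : ∑ i, ν i * q i = SIco m 0 k (fun i => ν i * q i) + SIco m k m (fun i => ν i * q i) := by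
        rw [← SIco_split 0 k m _ (Nat.zero_le _) hk, SIco_univ]
      have e1 : SIco m 0 k q ≤ SIco m 0 k (fun i => ν i * q i + (1 - ν i) * Λ) := by
        apply SIco_mono
        intro i _ hik
        have hqi : q i ≤ Λ := by
          apply mq
          rw [Fin.le_def]
          simp only [Fin.val_mk]
          omega
        nlinarith [hμ1 (σ i), hμ0 (σ i)]
      have e2 : SIco m 0 k (fun i => ν i * q i + (1 - ν i) * Λ)
          = SIco m 0 k (fun i => ν i * q i) + ((k:ℝ) * Λ - SIco m 0 k ν * Λ) := by
        rw [SIco_add]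
        congr 1
        have h1 : SIco m 0 k (fun i => (1 - ν i) * Λ)
            = SIco m 0 k (fun i => (fun _ : Fin m => Λ) i - (fun i => ν i * Λ) i) := by
          apply SIco_congr; intro i _ _; ring
        rw [h1, SIco_sub, SIco_const 0 k Λ hk, SIco_smul]
        simp only [Nat.sub_zero]
      have e3 : SIco m k m ν * Λ ≤ SIco m k m (fun i => ν i * q i) := by
        rw [← SIco_smul]
        apply SIco_mono
        intro i hik _
        have hqi : Λ ≤ q i := by
          apply mq
          rw [Fin.le_def]
          simp only [Fin.val_mk]
          omega
        nlinarith [hμ0 (σ i)]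
      have e4 : SIco m 0 k ν + SIco m k m ν = (k:ℝ) := by
        rw [← SIco_split 0 k m _ (Nat.zero_le _) hk, SIco_univ, hνs]
      have e5 : (k:ℝ) * Λ - SIco m 0 k ν * Λ = SIco m k m ν * Λ := by
        rw [← e4]; ring
      linarith
    calc (Finset.univ.powersetCard k).inf' hne (fun T => ∑ l ∈ T, p l)
        ≤ SIco m 0 k q := by rw [← step2]; exact step1
      _ ≤ ∑ i, ν i * q i := key
      _ = ∑ i, μ i * p i := hsum


private lemma cert (k ka : ℕ) (hk : k ≤ m) (φ : Fin m → ℝ) (hφpos : ∀ i, 0 < φ i)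
    (hne : ((Finset.univ : Finset (Fin m)).powersetCard k).Nonempty)
    (a μ : Fin m → ℝ) (θ : ℝ)
    (ha01 : ∀ i, 0 ≤ a i ∧ a i ≤ 1) (haS : ∑ i, a i = (ka:ℝ))
    (hμ0 : ∀ i, 0 ≤ μ i) (hμ1 : ∀ i, μ i ≤ 1) (hμs : ∑ i, μ i = (k:ℝ))
    (h1 : ∀ i, θ < μ i * φ i → a i = 1) (h0 : ∀ i, μ i * φ i < θ → a i = 0)
    (heq : ∑ i, μ i * (a i * φ i)
      = (Finset.univ.powersetCard k).inf' hne (fun T => ∑ l ∈ T, a l * φ l)) :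
    ∀ α : Fin m → ℝ, (∀ i, 0 ≤ α i ∧ α i ≤ 1) → ∑ i, α i = (ka:ℝ) →
      (Finset.univ.powersetCard k).inf' hne (fun T => ∑ l ∈ T, α l * φ l)
        ≤ (Finset.univ.powersetCard k).inf' hne (fun T => ∑ l ∈ T, a l * φ l) := by
  intro α hα01 hαS
  have step1 : (Finset.univ.powersetCard k).inf' hne (fun T => ∑ l ∈ T, α l * φ l)
      ≤ ∑ i, μ i * (α i * φ i) :=
    inf'_le_weighted k hk (fun i => α i * φ i) μ
      (fun i => mul_nonneg (hα01 i).1 (hφpos i).le) hμ0 hμ1 hμs hne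
  have key : ∀ i : Fin m, 0 ≤ (μ i * φ i - θ) * (a i - α i) := by
    intro i
    rcases lt_trichotomy (μ i * φ i) θ with hlt | heq' | hgt
    · have ha := h0 i hlt
      have e1 : μ i * φ i - θ ≤ 0 := by linarith
      have e2 : a i - α i ≤ 0 := by rw [ha]; linarith [(hα01 i).1]
      exact mul_nonneg_of_nonpos_of_nonpos e1 e2
    · rw [heq']; simp
    · have ha := h1 i hgt
      apply mul_nonneg
      · linarith
      · rw [ha]; linarith [(hα01 i).2]
  have expand : ∀ i : Fin m, (μ i * φ i - θ) * (a i - α i)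
      = (μ i * (a i * φ i) - μ i * (α i * φ i)) - (θ * a i - θ * α i) := by
    intro i; ring
  have hsum : ∑ i, (μ i * φ i - θ) * (a i - α i)
      = ((∑ i, μ i * (a i * φ i)) - ∑ i, μ i * (α i * φ i))
        - ((θ * ∑ i, a i) - θ * ∑ i, α i) := by
    rw [Finset.mul_sum, Finset.mul_sum, ← Finset.sum_sub_distrib, ← Finset.sum_sub_distrib,
      ← Finset.sum_sub_distrib]
    exact Finset.sum_congr rfl fun i _ => expand i
  have hnn : 0 ≤ ∑ i, (μ i * φ i - θ) * (a i - α i) :=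
    Finset.sum_nonneg fun i _ => key i
  rw [hsum, haS, hαS] at hnn
  calc (Finset.univ.powersetCard k).inf' hne (fun T => ∑ l ∈ T, α l * φ l)
      ≤ ∑ i, μ i * (α i * φ i) := step1
    _ ≤ ∑ i, μ i * (a i * φ i) := by linarith
    _ = _ := heq

private lemma package (k ka : ℕ) (hm : 1 ≤ m) (φ a : Fin m → ℝ)
    (pm : Monotone (fun i => a i * φ i))
    (hcount : ((Finset.univ : Finset (Fin m)).filter
        (fun i => a i * φ i < a ⟨m-1, by omega⟩ * φ ⟨m-1, by omega⟩)).card + 1 ≤ max ka k) :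
    ∃ s r : ℕ, 1 ≤ s ∧ s ≤ max ka k ∧ r ≤ s - 1 ∧
      (∀ i j : Fin m, s ≤ (j : ℕ) + 1 → j ≤ i → a i * φ i = a j * φ j) ∧
      (∀ i j : Fin m, s - r ≤ (j : ℕ) + 1 → j ≤ i → (i : ℕ) + 1 ≤ s - 1 →
        a j * φ j ≤ a i * φ i) ∧
      (∀ i t : Fin m, (i : ℕ) + 1 < s → s ≤ (t : ℕ) + 1 → a i * φ i < a t * φ t) ∧
      (∀ i : Fin m, (i : ℕ) + 1 < s - r → a i = 0) := by
  set last : Fin m := ⟨m-1, by omega⟩ with hlast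
  set p : Fin m → ℝ := fun i => a i * φ i with hp
  set S : Finset (Fin m) := Finset.univ.filter (fun i => p i < p last) with hS
  have pmax_ge : ∀ i, p i ≤ p last := by
    intro i
    apply pm
    rw [Fin.le_def]
    simp only [hlast, Fin.val_mk]
    omega
  have f1 : ∀ i : Fin m, S.card ≤ (i:ℕ) → p i = p last := by
    intro i hi
    by_contra hne'
    have hlt : p i < p last := lt_of_le_of_ne (pmax_ge i) hne'
    have hsub : (Finset.univ.filter fun j : Fin m => 0 ≤ (j:ℕ) ∧ (j:ℕ) < (i:ℕ)+1) ⊆ S := by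
      intro j hj
      simp only [Finset.mem_filter, Finset.mem_univ, true_and] at hj
      rw [hS, Finset.mem_filter]
      refine ⟨Finset.mem_univ _, lt_of_le_of_lt ?_ hlt⟩
      apply pm
      rw [Fin.le_def]; omega
    have hcard := Finset.card_le_card hsub
    rw [card_filter_Ico 0 ((i:ℕ)+1) (by omega)] at hcard
    omega
  have f2 : ∀ i : Fin m, (i:ℕ) < S.card → p i < p last := by
    intro i hi
    by_contra hge
    push_neg at hge
    have hpi : p i = p last := le_antisymm (pmax_ge i) hge
    have hsub : S ⊆ Finset.univ.filter fun j : Fin m => 0 ≤ (j:ℕ) ∧ (j:ℕ) < (i:ℕ) := by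
      intro j hj
      rw [hS, Finset.mem_filter] at hj
      simp only [Finset.mem_filter, Finset.mem_univ, true_and]
      refine ⟨Nat.zero_le _, ?_⟩
      by_contra hji
      push_neg at hji
      have : p last ≤ p j := by
        rw [← hpi]
        apply pm
        rw [Fin.le_def]; omega
      linarith [hj.2]
    have hcard := Finset.card_le_card hsub
    rw [card_filter_Ico 0 (i:ℕ) (by omega)] at hcard
    omega
  refine ⟨S.card + 1, S.card, by omega, hcount, by omega, ?_, ?_, ?_, ?_⟩
  · intro i j hsj hji
    have hj := f1 j (by omega)
    have hi := f1 i (by have := Fin.le_def.mp hji; omega)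
    show p i = p j
    rw [hi, hj]
  · intro i j _ hji _
    exact pm hji
  · intro i t hi ht
    have h2 := f2 i (by omega)
    have h1' := f1 t (by omega)
    show p i < p t
    rw [h1']
    exact h2
  · intro i hi
    omega


private lemma SIco_refl (lo : ℕ) (F : Fin m → ℝ) : SIco m lo lo F = 0 := by
  unfold SIco
  apply Finset.sum_eq_zero
  intro i hi'
  simp only [Finset.mem_filter, Finset.mem_univ, true_and] at hi'
  omega

private def GoalProp (m k ka : ℕ) (φ : Fin m → ℝ)
    (hne : ((Finset.univ : Finset (Fin m)).powersetCard k).Nonempty) : Prop :=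
  ∃ a : Fin m → ℝ, ((∀ i, 0 ≤ a i ∧ a i ≤ 1) ∧ ∑ i, a i = (ka:ℝ)) ∧
    (∀ α : Fin m → ℝ, ((∀ i, 0 ≤ α i ∧ α i ≤ 1) ∧ ∑ i, α i = (ka:ℝ)) →
      (Finset.univ.powersetCard k).inf' hne (fun T => ∑ l ∈ T, α l * φ l)
        ≤ (Finset.univ.powersetCard k).inf' hne (fun T => ∑ l ∈ T, a l * φ l)) ∧
    ∃ s r : ℕ, 1 ≤ s ∧ s ≤ max ka k ∧ r ≤ s - 1 ∧
      (∀ i j : Fin m, s ≤ (j : ℕ) + 1 → j ≤ i → a i * φ i = a j * φ j) ∧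
      (∀ i j : Fin m, s - r ≤ (j : ℕ) + 1 → j ≤ i → (i : ℕ) + 1 ≤ s - 1 →
        a j * φ j ≤ a i * φ i) ∧
      (∀ i t : Fin m, (i : ℕ) + 1 < s → s ≤ (t : ℕ) + 1 → a i * φ i < a t * φ t) ∧
      (∀ i : Fin m, (i : ℕ) + 1 < s - r → a i = 0)

private lemma configB (k ka : ℕ) (hm1 : 1 ≤ m) (hk : k ≤ m) (hka : 1 ≤ ka)
    (φ : Fin m → ℝ) (hφpos : ∀ i, 0 < φ i) (hφmono : Monotone φ)
    (hne : ((Finset.univ : Finset (Fin m)).powersetCard k).Nonempty)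
    (c : ℝ) (hc : 0 < c)
    (hcov : ∀ i : Fin m, (i:ℕ) < k → φ i ≤ c)
    (hbud : ∑ i, min 1 (c / φ i) = (ka:ℝ)) : GoalProp m k ka φ hne := by
  set a : Fin m → ℝ := fun i => min 1 (c / φ i) with ha
  have pexp : ∀ i, a i * φ i = min (φ i) c := by
    intro i
    rcases le_total (c / φ i) 1 with h | h
    · rw [ha]
      simp only []
      rw [min_eq_right h, div_mul_cancel₀ _ (hφpos i).ne']
      rw [min_eq_right]
      rw [div_le_one (hφpos i)] at h
      exact h
    · rw [ha]
      simp only []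
      rw [min_eq_left h, one_mul, min_eq_left]
      rw [le_div_iff₀ (hφpos i), one_mul] at h
      exact h
  have pm : Monotone (fun i => a i * φ i) := by
    have : (fun i => a i * φ i) = fun i => min (φ i) c := funext pexp
    rw [this]
    exact hφmono.min monotone_const
  have ha01 : ∀ i, 0 ≤ a i ∧ a i ≤ 1 := by
    intro i
    constructor
    · exact le_min (by norm_num) (div_nonneg hc.le (hφpos i).le)
    · exact min_le_left _ _
  set μ : Fin m → ℝ := fun i => if (i:ℕ) < k then (1:ℝ) else 0 with hμ
  have hfilteq : (Finset.univ.filter fun i : Fin m => (i:ℕ) < k)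
      = Finset.univ.filter fun i : Fin m => 0 ≤ (i:ℕ) ∧ (i:ℕ) < k := by
    ext i; simp
  have hμs : ∑ i, μ i = (k:ℝ) := by
    rw [hμ, Finset.sum_ite, Finset.sum_const, Finset.sum_const_zero, hfilteq,
      card_filter_Ico 0 k hk]
    simp
  have h1 : ∀ i, (0:ℝ) < μ i * φ i → a i = 1 := by
    intro i hi
    have hik : (i:ℕ) < k := by
      by_contra hik
      simp only [hμ, if_neg hik, zero_mul] at hi
      exact absurd hi (lt_irrefl 0)
    have := hcov i hik
    rw [ha]
    simp only []
    rw [min_eq_left]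
    rw [le_div_iff₀ (hφpos i), one_mul]
    exact this
  have h0 : ∀ i, μ i * φ i < (0:ℝ) → a i = 0 := by
    intro i hi
    exfalso
    simp only [hμ] at hi
    split_ifs at hi with h
    · linarith [(hφpos i)]
    · linarith
  have heq : ∑ i, μ i * (a i * φ i)
      = (Finset.univ.powersetCard k).inf' hne (fun T => ∑ l ∈ T, a l * φ l) := by
    rw [inf'_powersetCard_monotone k hk _ pm hne]
    unfold SIco
    rw [← hfilteq, Finset.sum_filter]
    apply Finset.sum_congr rfl
    intro i _
    by_cases h : (i:ℕ) < k <;> simp [hμ, h]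
  have opt : ∀ α : Fin m → ℝ, ((∀ i, 0 ≤ α i ∧ α i ≤ 1) ∧ ∑ i, α i = (ka:ℝ)) →
      (Finset.univ.powersetCard k).inf' hne (fun T => ∑ l ∈ T, α l * φ l)
        ≤ (Finset.univ.powersetCard k).inf' hne (fun T => ∑ l ∈ T, a l * φ l) := by
    intro α hα
    exact cert k ka hk φ hφpos hne a μ 0 ha01 hbud
      (fun i => by by_cases h : (i:ℕ) < k <;> simp [hμ, h])
      (fun i => by by_cases h : (i:ℕ) < k <;> simp [hμ, h])
      hμs h1 h0 heq α hα.1 hα.2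
  -- count bound
  set last : Fin m := ⟨m-1, by omega⟩ with hlast
  set S := Finset.univ.filter (fun i : Fin m => a i * φ i < a last * φ last) with hS
  have hSone : ∀ i ∈ S, a i = 1 := by
    intro i hi
    rw [hS, Finset.mem_filter] at hi
    have hi2 := hi.2
    rw [pexp i, pexp last] at hi2
    have h3 : min (φ i) c < c := lt_of_lt_of_le hi2 (min_le_right _ _)
    have h4 : φ i < c := by
      rcases le_total (φ i) c with h | h
      · rwa [min_eq_left h] at h3
      · rw [min_eq_right h] at h3; linarith
    rw [ha]
    simp only []
    rw [min_eq_left]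
    rw [le_div_iff₀ (hφpos i), one_mul]
    exact h4.le
  have hlastnS : last ∉ S := by
    rw [hS, Finset.mem_filter]
    push_neg
    intro _
    exact le_refl _
  have hcard : (S.card : ℝ) < ka := by
    have e1 : (S.card : ℝ) = ∑ i ∈ S, a i := by
      rw [Finset.sum_congr rfl hSone, Finset.sum_const, nsmul_eq_mul, mul_one]
    have e2 : ∑ i ∈ insert last S, a i ≤ ∑ i, a i := by
      apply Finset.sum_le_sum_of_subset_of_nonneg (Finset.subset_univ _)
      intro i _ _
      exact (ha01 i).1
    rw [Finset.sum_insert hlastnS] at e2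
    have e3 : 0 < a last := lt_min one_pos (div_pos hc (hφpos last))
    rw [hbud] at e2
    linarith
  have hcount : S.card + 1 ≤ max ka k := by
    have : S.card < ka := by exact_mod_cast hcard
    omega
  exact ⟨a, ⟨ha01, hbud⟩, opt,
    package k ka hm1 φ a pm hcount⟩


private lemma configA0 (k ka : ℕ) (hm1 : 1 ≤ m) (hkm : k < m) (hka : 1 ≤ ka)
    (φ : Fin m → ℝ) (hφpos : ∀ i, 0 < φ i) (hφmono : Monotone φ)
    (hne : ((Finset.univ : Finset (Fin m)).powersetCard k).Nonempty)
    (z w : ℕ) (c θ : ℝ) (hzw : z ≤ w) (hwk : w ≤ k) (hc : 0 < c) (hθ0 : 0 ≤ θ)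
    (hiff : ∀ i : Fin m, z ≤ (i:ℕ) → (φ i ≤ c ↔ (i:ℕ) < w))
    (hbud : ((w - z : ℕ):ℝ) + c * SIco m w m (fun i => (φ i)⁻¹) = (ka:ℝ))
    (hzθ : ∀ i : Fin m, (i:ℕ) < z → φ i ≤ θ)
    (hθφ : ∀ i : Fin m, z ≤ (i:ℕ) → θ ≤ φ i)
    (hμs : (w:ℝ) + θ * SIco m w m (fun i => (φ i)⁻¹) = (k:ℝ)) : GoalProp m k ka φ hne := by
  have hk : k ≤ m := hkm.le
  set Hs : ℝ := SIco m w m (fun i => (φ i)⁻¹) with hHs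
  set a : Fin m → ℝ := fun i => if (i:ℕ) < z then 0 else if (i:ℕ) < w then 1 else c / φ i with ha
  set μ : Fin m → ℝ := fun i => if (i:ℕ) < w then 1 else θ / φ i with hμ
  have hcφ : ∀ i : Fin m, ¬ ((i:ℕ) < w) → c < φ i := by
    intro i hi
    have hzi : z ≤ (i:ℕ) := by omega
    by_contra hcon
    push_neg at hcon
    exact hi ((hiff i hzi).mp hcon)
  have hφc : ∀ i : Fin m, z ≤ (i:ℕ) → (i:ℕ) < w → φ i ≤ c := fun i h1 h2 => (hiff i h1).mpr h2
  have pexp : ∀ i, a i * φ i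
      = (if (i:ℕ) < z then 0 else if (i:ℕ) < w then φ i else c) := by
    intro i
    simp only [ha]
    split_ifs with h1 h2
    · ring
    · ring
    · rw [div_mul_cancel₀ _ (hφpos i).ne']
  have pm : Monotone (fun i => a i * φ i) := by
    intro i j hij
    have hv : (i:ℕ) ≤ (j:ℕ) := hij
    show a i * φ i ≤ a j * φ j
    rw [pexp i, pexp j]
    split_ifs with h1 h2 h3 h4 h5 h6 h7 h8
    all_goals try omega
    all_goals try linarith [hφpos j, hφpos i]
    · exact hφmono hij
    · exact hφc i (by omega) (by omega)
  have ha01 : ∀ i, 0 ≤ a i ∧ a i ≤ 1 := by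
    intro i
    simp only [ha]
    split_ifs with h1 h2
    · norm_num
    · norm_num
    · constructor
      · exact div_nonneg hc.le (hφpos i).le
      · rw [div_le_one (hφpos i)]
        exact (hcφ i h2).le
  have haS : ∑ i, a i = (ka:ℝ) := by
    rw [← SIco_univ, SIco_split 0 z m a (by omega) (by omega), SIco_split z w m a hzw (by omega)]
    have e1 : SIco m 0 z a = 0 := by
      rw [show (0:ℝ) = SIco m 0 z (fun _ => 0) by
        rw [SIco_const 0 z 0 (by omega)]; ring]
      apply SIco_congr
      intro i _ h2
      simp only [ha, if_pos h2]
    have e2 : SIco m z w a = ((w - z : ℕ):ℝ) := by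
      rw [show ((w - z : ℕ):ℝ) = SIco m z w (fun _ => 1) by
        rw [SIco_const z w 1 (by omega)]; ring]
      apply SIco_congr
      intro i h1 h2
      simp only [ha]
      rw [if_neg (by omega), if_pos h2]
    have e3 : SIco m w m a = c * Hs := by
      rw [show c * Hs = SIco m w m (fun i => (φ i)⁻¹ * c) by rw [SIco_smul, hHs]; ring]
      apply SIco_congr
      intro i h1 _
      simp only [ha]
      rw [if_neg (by omega), if_neg (by omega)]
      rw [div_eq_mul_inv, mul_comm]
    rw [e1, e2, e3]
    linarith [hbud]
  have hμ0 : ∀ i, 0 ≤ μ i := by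
    intro i
    simp only [hμ]
    split_ifs
    · norm_num
    · exact div_nonneg hθ0 (hφpos i).le
  have hμ1 : ∀ i, μ i ≤ 1 := by
    intro i
    simp only [hμ]
    split_ifs with h
    · norm_num
    · rw [div_le_one (hφpos i)]
      exact hθφ i (by omega)
  have hμsum : ∑ i, μ i = (k:ℝ) := by
    rw [← SIco_univ, SIco_split 0 w m μ (by omega) (by omega)]
    have e1 : SIco m 0 w μ = ((w - 0 : ℕ):ℝ) := by
      rw [show ((w - 0 : ℕ):ℝ) = SIco m 0 w (fun _ => 1) by
        rw [SIco_const 0 w 1 (by omega)]; ring]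
      apply SIco_congr
      intro i _ h2
      simp only [hμ, if_pos h2]
    have e2 : SIco m w m μ = θ * Hs := by
      rw [show θ * Hs = SIco m w m (fun i => (φ i)⁻¹ * θ) by rw [SIco_smul, hHs]; ring]
      apply SIco_congr
      intro i h1 _
      simp only [hμ]
      rw [if_neg (by omega), div_eq_mul_inv, mul_comm]
    rw [e1, e2]
    simp only [Nat.sub_zero]
    linarith [hμs]
  have h1 : ∀ i, θ < μ i * φ i → a i = 1 := by
    intro i hi
    simp only [hμ] at hi
    split_ifs at hi with h
    · rw [one_mul] at hi
      have hiz : ¬ ((i:ℕ) < z) := by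
        intro hz'
        linarith [hzθ i hz']
      simp only [ha]
      rw [if_neg hiz, if_pos h]
    · rw [div_mul_cancel₀ _ (hφpos i).ne'] at hi
      exact absurd hi (lt_irrefl θ)
  have h0 : ∀ i, μ i * φ i < θ → a i = 0 := by
    intro i hi
    simp only [hμ] at hi
    split_ifs at hi with h
    · rw [one_mul] at hi
      have hiz : (i:ℕ) < z := by
        by_contra hz'
        linarith [hθφ i (by omega)]
      simp only [ha, if_pos hiz]
    · rw [div_mul_cancel₀ _ (hφpos i).ne'] at hi
      exact absurd hi (lt_irrefl θ)
  have heq : ∑ i, μ i * (a i * φ i)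
      = (Finset.univ.powersetCard k).inf' hne (fun T => ∑ l ∈ T, a l * φ l) := by
    rw [inf'_powersetCard_monotone k hk _ pm hne]
    have lhs : ∑ i, μ i * (a i * φ i) = SIco m z w φ + θ * c * Hs := by
      rw [← SIco_univ, SIco_split 0 z m _ (by omega) (by omega),
        SIco_split z w m _ hzw (by omega)]
      have e1 : SIco m 0 z (fun i => μ i * (a i * φ i)) = 0 := by
        rw [show (0:ℝ) = SIco m 0 z (fun _ => 0) by
          rw [SIco_const 0 z 0 (by omega)]; ring]
        apply SIco_congr
        intro i _ h2
        rw [pexp i]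
        rw [if_pos h2]; ring
      have e2 : SIco m z w (fun i => μ i * (a i * φ i)) = SIco m z w φ := by
        apply SIco_congr
        intro i hge hlt
        rw [pexp i]
        simp only [hμ]
        rw [if_pos hlt, one_mul, if_neg (show ¬((i:ℕ) < z) by omega), if_pos hlt]
      have e3 : SIco m w m (fun i => μ i * (a i * φ i)) = θ * c * Hs := by
        rw [show θ * c * Hs = SIco m w m (fun i => (φ i)⁻¹ * (θ * c)) by rw [SIco_smul, hHs]; ring]
        apply SIco_congr
        intro i hge _
        rw [pexp i]
        simp only [hμ]
        rw [if_neg (by omega), if_neg (by omega), if_neg (by omega)]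
        field_simp
      rw [e1, e2, e3]; ring
    have rhs : SIco m 0 k (fun i => a i * φ i) = SIco m z w φ + ((k - w : ℕ):ℝ) * c := by
      rw [SIco_split 0 z k _ (by omega) (by omega), SIco_split z w k _ hzw hwk]
      have e1 : SIco m 0 z (fun i => a i * φ i) = 0 := by
        rw [show (0:ℝ) = SIco m 0 z (fun _ => 0) by
          rw [SIco_const 0 z 0 (by omega)]; ring]
        apply SIco_congr
        intro i _ h2
        rw [pexp i, if_pos h2]
      have e2 : SIco m z w (fun i => a i * φ i) = SIco m z w φ := by
        apply SIco_congr
        intro i hge hlt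
        rw [pexp i, if_neg (by omega), if_pos hlt]
      have e3 : SIco m w k (fun i => a i * φ i) = ((k - w : ℕ):ℝ) * c := by
        rw [show ((k - w : ℕ):ℝ) * c = SIco m w k (fun _ => c) by
          rw [SIco_const w k c (by omega)]]
        apply SIco_congr
        intro i hge _
        rw [pexp i, if_neg (by omega), if_neg (by omega)]
      rw [e1, e2, e3]; ring
    rw [lhs, rhs]
    have : θ * Hs = (k:ℝ) - w := by linarith [hμs]
    have hcast : ((k - w : ℕ):ℝ) = (k:ℝ) - w := by
      rw [Nat.cast_sub hwk]
    rw [hcast]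
    nlinarith [this]
  have opt : ∀ α : Fin m → ℝ, ((∀ i, 0 ≤ α i ∧ α i ≤ 1) ∧ ∑ i, α i = (ka:ℝ)) →
      (Finset.univ.powersetCard k).inf' hne (fun T => ∑ l ∈ T, α l * φ l)
        ≤ (Finset.univ.powersetCard k).inf' hne (fun T => ∑ l ∈ T, a l * φ l) := by
    intro α hα
    exact cert k ka hk φ hφpos hne a μ θ ha01 haS hμ0 hμ1 hμsum h1 h0 heq α hα.1 hα.2
  -- count bound
  set last : Fin m := ⟨m-1, by omega⟩ with hlast
  set S := Finset.univ.filter (fun i : Fin m => a i * φ i < a last * φ last) with hS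
  have hwm1 : w ≤ m - 1 := by omega
  have hplast : a last * φ last = c := by
    rw [pexp last]
    rw [if_neg (by simp only [hlast, Fin.val_mk]; omega), if_neg (by simp only [hlast, Fin.val_mk]; omega)]
  have hSsub : ∀ i ∈ S, (i:ℕ) < w := by
    intro i hi
    rw [hS, Finset.mem_filter] at hi
    have h2 := hi.2
    rw [hplast, pexp i] at h2
    by_contra hge
    rw [if_neg (by omega), if_neg hge] at h2
    exact absurd h2 (lt_irrefl c)
  have hScard : S.card ≤ w := by
    have : S ⊆ Finset.univ.filter fun i : Fin m => 0 ≤ (i:ℕ) ∧ (i:ℕ) < w := by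
      intro i hi
      simp only [Finset.mem_filter, Finset.mem_univ, true_and]
      exact ⟨Nat.zero_le _, hSsub i hi⟩
    have := Finset.card_le_card this
    rwa [card_filter_Ico 0 w (by omega), Nat.sub_zero] at this
  have hcount : S.card + 1 ≤ max ka k := by
    rcases Nat.lt_or_ge w k with hwlt | hwge
    · have : S.card + 1 ≤ k := by omega
      omega
    · -- w = k
      have hwk' : w = k := le_antisymm hwk hwge
      have hHspos : 0 < Hs := by
        rw [hHs]
        unfold SIco
        apply Finset.sum_pos
        · intro i _
          exact inv_pos.mpr (hφpos i)
        · refine ⟨last, ?_⟩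
          simp only [Finset.mem_filter, Finset.mem_univ, true_and, hlast, Fin.val_mk]
          omega
      have hθz : θ = 0 := by
        have : θ * Hs = (k:ℝ) - w := by linarith [hμs]
        rw [hwk'] at this
        simp only [sub_self] at this
        rcases mul_eq_zero.mp this with h | h
        · exact h
        · exact absurd h hHspos.ne'
      have hz0 : z = 0 := by
        by_contra hz'
        have h0m : (0:ℕ) < m := by omega
        have := hzθ ⟨0, h0m⟩ (by simp only [Fin.val_mk]; omega)
        have := hφpos ⟨0, h0m⟩
        rw [hθz] at *
        linarith
      -- all S elements have a = 1
      have hSone : ∀ i ∈ S, a i = 1 := by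
        intro i hi
        have := hSsub i hi
        simp only [ha]
        rw [if_neg (by omega), if_pos this]
      have hlastnS : last ∉ S := by
        rw [hS, Finset.mem_filter]
        push_neg
        intro _
        exact le_refl _
      have hlastv : (last:ℕ) = m - 1 := rfl
      have halast : 0 < a last := by
        simp only [ha]
        rw [if_neg (show ¬((last:ℕ) < z) by rw [hlastv]; omega),
          if_neg (show ¬((last:ℕ) < w) by rw [hlastv]; omega)]
        exact div_pos hc (hφpos last)
      have hcard : (S.card : ℝ) < ka := by
        have e1 : (S.card : ℝ) = ∑ i ∈ S, a i := by
          rw [Finset.sum_congr rfl hSone, Finset.sum_const, nsmul_eq_mul, mul_one]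
        have e2 : ∑ i ∈ insert last S, a i ≤ ∑ i, a i := by
          apply Finset.sum_le_sum_of_subset_of_nonneg (Finset.subset_univ _)
          intro i _ _
          exact (ha01 i).1
        rw [Finset.sum_insert hlastnS] at e2
        rw [haS] at e2
        linarith
      have : S.card < ka := by exact_mod_cast hcard
      omega
  exact ⟨a, ⟨ha01, haS⟩, opt, package k ka hm1 φ a pm hcount⟩


set_option maxHeartbeats 2000000 in
private lemma configA1 (k ka : ℕ) (hm1 : 1 ≤ m) (hkm : k < m) (hka : 1 ≤ ka)
    (φ : Fin m → ℝ) (hφpos : ∀ i, 0 < φ i) (hφmono : Monotone φ)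
    (hne : ((Finset.univ : Finset (Fin m)).powersetCard k).Nonempty)
    (z b : ℕ) (x : ℝ) (hzb : z < b) (hbk : b < k)
    (hzm : z < m) (hbm : b < m)
    (hx0 : 0 ≤ x) (hx1 : x ≤ 1)
    (hbud : x + ((b - z : ℕ):ℝ) + φ ⟨b, hbm⟩ * SIco m (b+1) m (fun i => (φ i)⁻¹) = (ka:ℝ))
    (hμbl : φ ⟨z, hzm⟩ / φ ⟨b, hbm⟩
      ≤ (k:ℝ) - b - φ ⟨z, hzm⟩ * SIco m (b+1) m (fun i => (φ i)⁻¹))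
    (hμbu : (k:ℝ) - b - φ ⟨z, hzm⟩ * SIco m (b+1) m (fun i => (φ i)⁻¹) ≤ 1) :
    GoalProp m k ka φ hne := by
  have hk : k ≤ m := hkm.le
  set zF : Fin m := ⟨z, hzm⟩ with hzF
  set bF : Fin m := ⟨b, hbm⟩ with hbF
  set Hs : ℝ := SIco m (b+1) m (fun i => (φ i)⁻¹) with hHs
  set μb : ℝ := (k:ℝ) - b - φ zF * Hs with hμbdef
  set a : Fin m → ℝ := fun i =>
    if (i:ℕ) < z then 0 else if (i:ℕ) = z then x else if (i:ℕ) ≤ b then 1 else φ bF / φ i with ha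
  set μ : Fin m → ℝ := fun i =>
    if (i:ℕ) < b then 1 else if (i:ℕ) = b then μb else φ zF / φ i with hμ
  have hzFv : (zF:ℕ) = z := rfl
  have hbFv : (bF:ℕ) = b := rfl
  have hφzb : φ zF ≤ φ bF := hφmono (Fin.le_def.mpr (by omega))
  have pexp : ∀ i, a i * φ i
      = (if (i:ℕ) < z then 0 else if (i:ℕ) = z then x * φ zF
          else if (i:ℕ) ≤ b then φ i else φ bF) := by
    intro i
    simp only [ha]
    split_ifs with h1 h2 h3
    · ring
    · rw [show φ i = φ zF from congrArg φ (Fin.ext (by omega))]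
    · ring
    · rw [div_mul_cancel₀ _ (hφpos i).ne']
  have pm : Monotone (fun i => a i * φ i) := by
    intro i j hij
    have hv : (i:ℕ) ≤ (j:ℕ) := hij
    show a i * φ i ≤ a j * φ j
    rw [pexp i, pexp j]
    split_ifs
    all_goals try omega
    all_goals try exact le_refl _
    all_goals try exact hφmono (Fin.le_def.mpr (by omega))
    all_goals
      nlinarith [hφpos i, hφpos j, hφpos zF, hφpos bF, hφzb,
        hφmono (Fin.le_def.mpr (show (zF:ℕ) ≤ (j:ℕ) by omega) : zF ≤ j)]
  have ha01 : ∀ i, 0 ≤ a i ∧ a i ≤ 1 := by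
    intro i
    simp only [ha]
    split_ifs with h1 h2 h3
    · norm_num
    · exact ⟨hx0, hx1⟩
    · norm_num
    · constructor
      · exact div_nonneg (hφpos bF).le (hφpos i).le
      · rw [div_le_one (hφpos i)]
        exact hφmono (Fin.le_def.mpr (by omega))
  have haS : ∑ i, a i = (ka:ℝ) := by
    rw [← SIco_univ, SIco_split 0 z m a (by omega) (by omega),
      SIco_split z (z+1) m a (by omega) (by omega),
      SIco_split (z+1) (b+1) m a (by omega) (by omega)]
    have e1 : SIco m 0 z a = 0 := by
      rw [show (0:ℝ) = SIco m 0 z (fun _ => 0) by rw [SIco_const 0 z 0 (by omega)]; ring]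
      apply SIco_congr
      intro i _ h2
      simp only [ha, if_pos h2]
    have e2 : SIco m z (z+1) a = x := by
      rw [SIco_step z (z+1) hzm (by omega) a, SIco_refl]
      show a zF + 0 = x
      simp [ha, hzFv]
    have e3 : SIco m (z+1) (b+1) a = ((b - z : ℕ):ℝ) := by
      rw [show ((b - z : ℕ):ℝ) = SIco m (z+1) (b+1) (fun _ => 1) by
        rw [SIco_const (z+1) (b+1) 1 (by omega)]
        rw [show (b+1) - (z+1) = b - z by omega]; ring]
      apply SIco_congr
      intro i h1' h2'
      simp only [ha]
      rw [if_neg (by omega), if_neg (by omega), if_pos (by omega)]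
    have e4 : SIco m (b+1) m a = φ bF * Hs := by
      rw [show φ bF * Hs = SIco m (b+1) m (fun i => (φ i)⁻¹ * φ bF) by
        rw [SIco_smul, hHs]; ring]
      apply SIco_congr
      intro i h1' _
      simp only [ha]
      rw [if_neg (by omega), if_neg (by omega), if_neg (by omega)]
      rw [div_eq_mul_inv, mul_comm]
    rw [e1, e2, e3, e4]
    linarith [hbud]
  have hμ0 : ∀ i, 0 ≤ μ i := by
    intro i
    simp only [hμ]
    split_ifs
    · norm_num
    · exact le_trans (div_nonneg (hφpos zF).le (hφpos bF).le) hμbl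
    · exact div_nonneg (hφpos zF).le (hφpos i).le
  have hμ1 : ∀ i, μ i ≤ 1 := by
    intro i
    simp only [hμ]
    split_ifs with h1 h2
    · norm_num
    · exact hμbu
    · rw [div_le_one (hφpos i)]
      exact hφmono (Fin.le_def.mpr (by omega))
  have hμsum : ∑ i, μ i = (k:ℝ) := by
    rw [← SIco_univ, SIco_split 0 b m μ (by omega) (by omega),
      SIco_split b (b+1) m μ (by omega) (by omega)]
    have e1 : SIco m 0 b μ = (b:ℝ) := by
      rw [show (b:ℝ) = SIco m 0 b (fun _ => 1) by
        rw [SIco_const 0 b 1 (by omega)]; simp]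
      apply SIco_congr
      intro i _ h2
      simp only [hμ, if_pos h2]
    have e2 : SIco m b (b+1) μ = μb := by
      rw [SIco_step b (b+1) hbm (by omega) μ, SIco_refl]
      show μ bF + 0 = μb
      simp [hμ, hbFv]
    have e3 : SIco m (b+1) m μ = φ zF * Hs := by
      rw [show φ zF * Hs = SIco m (b+1) m (fun i => (φ i)⁻¹ * φ zF) by
        rw [SIco_smul, hHs]; ring]
      apply SIco_congr
      intro i h1' _
      simp only [hμ]
      rw [if_neg (by omega), if_neg (by omega)]
      rw [div_eq_mul_inv, mul_comm]
    rw [e1, e2, e3, hμbdef]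
    ring
  have h1 : ∀ i, φ zF < μ i * φ i → a i = 1 := by
    intro i hi
    simp only [hμ] at hi
    split_ifs at hi with h h'
    · rw [one_mul] at hi
      have hiz : ¬ ((i:ℕ) < z) := by
        intro hz'
        have := hφmono (Fin.le_def.mpr (show (i:ℕ) ≤ (zF:ℕ) by omega) : i ≤ zF)
        linarith
      have hiz2 : ¬ ((i:ℕ) = z) := by
        intro hz'
        rw [show φ i = φ zF from congrArg φ (Fin.ext (by omega))] at hi
        exact absurd hi (lt_irrefl _)
      simp only [ha]
      rw [if_neg hiz, if_neg hiz2, if_pos (by omega)]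
    · simp only [ha]
      rw [if_neg (by omega), if_neg (by omega), if_pos (by omega)]
    · rw [div_mul_cancel₀ _ (hφpos i).ne'] at hi
      exact absurd hi (lt_irrefl _)
  have h0 : ∀ i, μ i * φ i < φ zF → a i = 0 := by
    intro i hi
    simp only [hμ] at hi
    split_ifs at hi with h h'
    · rw [one_mul] at hi
      have hiz : (i:ℕ) < z := by
        by_contra hz'
        have := hφmono (Fin.le_def.mpr (show (zF:ℕ) ≤ (i:ℕ) by omega) : zF ≤ i)
        linarith
      simp only [ha, if_pos hiz]
    · exfalso
      rw [div_le_iff₀ (hφpos bF)] at hμbl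
      rw [show φ i = φ bF from congrArg φ (Fin.ext (by omega))] at hi
      linarith
    · rw [div_mul_cancel₀ _ (hφpos i).ne'] at hi
      exact absurd hi (lt_irrefl _)
  have heq : ∑ i, μ i * (a i * φ i)
      = (Finset.univ.powersetCard k).inf' hne (fun T => ∑ l ∈ T, a l * φ l) := by
    rw [inf'_powersetCard_monotone k hk _ pm hne]
    have lhs : ∑ i, μ i * (a i * φ i)
        = x * φ zF + SIco m (z+1) b φ + μb * φ bF + φ zF * φ bF * Hs := by
      rw [← SIco_univ, SIco_split 0 z m _ (by omega) (by omega),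
        SIco_split z (z+1) m _ (by omega) (by omega),
        SIco_split (z+1) b m _ (by omega) (by omega),
        SIco_split b (b+1) m _ (by omega) (by omega)]
      have e1 : SIco m 0 z (fun i => μ i * (a i * φ i)) = 0 := by
        rw [show (0:ℝ) = SIco m 0 z (fun _ => 0) by rw [SIco_const 0 z 0 (by omega)]; ring]
        apply SIco_congr
        intro i _ h2
        rw [pexp i, if_pos h2]
        ring
      have e2 : SIco m z (z+1) (fun i => μ i * (a i * φ i)) = x * φ zF := by
        rw [SIco_step z (z+1) hzm (by omega), SIco_refl]
        have hμz : μ zF = 1 := by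
          simp [hμ, hzb, hzFv, not_le.mpr hzb]
        have hpz : a zF * φ zF = x * φ zF := by
          rw [pexp zF, if_neg (by omega), if_pos hzFv]
        show μ zF * (a zF * φ zF) + 0 = x * φ zF
        rw [hμz, hpz]; ring
      have e3 : SIco m (z+1) b (fun i => μ i * (a i * φ i)) = SIco m (z+1) b φ := by
        apply SIco_congr
        intro i h1' h2'
        rw [pexp i]
        simp only [hμ]
        rw [if_pos h2', one_mul, if_neg (by omega), if_neg (by omega), if_pos (by omega)]
      have e4 : SIco m b (b+1) (fun i => μ i * (a i * φ i)) = μb * φ bF := by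
        rw [SIco_step b (b+1) hbm (by omega), SIco_refl]
        have hμb2 : μ bF = μb := by
          simp [hμ, hbFv]
        have hpb : a bF * φ bF = φ bF := by
          rw [pexp bF, if_neg (by omega), if_neg (by omega), if_pos (by omega)]
        show μ bF * (a bF * φ bF) + 0 = μb * φ bF
        rw [hμb2, hpb]; ring
      have e5 : SIco m (b+1) m (fun i => μ i * (a i * φ i)) = φ zF * φ bF * Hs := by
        rw [show φ zF * φ bF * Hs = SIco m (b+1) m (fun i => (φ i)⁻¹ * (φ zF * φ bF)) by
          rw [SIco_smul, hHs]; ring]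
        apply SIco_congr
        intro i h1' _
        rw [pexp i]
        simp only [hμ]
        rw [if_neg (by omega), if_neg (by omega), if_neg (by omega), if_neg (by omega),
          if_neg (by omega)]
        field_simp
      rw [e1, e2, e3, e4, e5]
      ring
    have rhs : SIco m 0 k (fun i => a i * φ i)
        = x * φ zF + (SIco m (z+1) b φ + φ bF) + ((k:ℝ) - b - 1) * φ bF := by
      rw [SIco_split 0 z k _ (by omega) (by omega),
        SIco_split z (z+1) k _ (by omega) (by omega),
        SIco_split (z+1) (b+1) k _ (by omega) (by omega)]
      have e1 : SIco m 0 z (fun i => a i * φ i) = 0 := by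
        rw [show (0:ℝ) = SIco m 0 z (fun _ => 0) by rw [SIco_const 0 z 0 (by omega)]; ring]
        apply SIco_congr
        intro i _ h2
        rw [pexp i, if_pos h2]
      have e2 : SIco m z (z+1) (fun i => a i * φ i) = x * φ zF := by
        rw [SIco_step z (z+1) hzm (by omega), SIco_refl]
        show a zF * φ zF + 0 = x * φ zF
        rw [pexp zF, if_neg (by omega), if_pos hzFv]
        ring
      have e3 : SIco m (z+1) (b+1) (fun i => a i * φ i) = SIco m (z+1) b φ + φ bF := by
        rw [SIco_split (z+1) b (b+1) _ (by omega) (by omega),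
          SIco_step b (b+1) hbm (by omega), SIco_refl]
        congr 1
        · apply SIco_congr
          intro i h1' h2'
          rw [pexp i]
          rw [if_neg (by omega), if_neg (by omega), if_pos (by omega)]
        · show a bF * φ bF + 0 = φ bF
          rw [pexp bF, if_neg (by omega), if_neg (by omega), if_pos (by omega)]
          ring
      have e4 : SIco m (b+1) k (fun i => a i * φ i) = ((k:ℝ) - b - 1) * φ bF := by
        rw [show ((k:ℝ) - b - 1) * φ bF = SIco m (b+1) k (fun _ => φ bF) by
          rw [SIco_const (b+1) k (φ bF) (by omega)]
          rw [Nat.cast_sub (by omega)]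
          push_cast
          ring]
        apply SIco_congr
        intro i h1' _
        rw [pexp i]
        rw [if_neg (by omega), if_neg (by omega), if_neg (by omega)]
      rw [e1, e2, e3, e4]
      ring
    rw [lhs, rhs, hμbdef]
    ring
  have opt : ∀ α : Fin m → ℝ, ((∀ i, 0 ≤ α i ∧ α i ≤ 1) ∧ ∑ i, α i = (ka:ℝ)) →
      (Finset.univ.powersetCard k).inf' hne (fun T => ∑ l ∈ T, α l * φ l)
        ≤ (Finset.univ.powersetCard k).inf' hne (fun T => ∑ l ∈ T, a l * φ l) := by
    intro α hα
    exact cert k ka hk φ hφpos hne a μ (φ zF) ha01 haS hμ0 hμ1 hμsum h1 h0 heq α hα.1 hα.2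
  -- count bound
  set last : Fin m := ⟨m-1, by omega⟩ with hlast
  have hlastv : (last:ℕ) = m - 1 := rfl
  set S := Finset.univ.filter (fun i : Fin m => a i * φ i < a last * φ last) with hS
  have hplast : a last * φ last = φ bF := by
    rw [pexp last]
    rw [if_neg (by rw [hlastv]; omega), if_neg (by rw [hlastv]; omega)]
    by_cases hlb : (last:ℕ) ≤ b
    · rw [if_pos hlb]
      exact congrArg φ (Fin.ext (by omega))
    · rw [if_neg hlb]
  have hSsub : ∀ i ∈ S, (i:ℕ) < b := by
    intro i hi
    rw [hS, Finset.mem_filter] at hi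
    have h2 := hi.2
    rw [hplast, pexp i] at h2
    by_contra hge
    push_neg at hge
    rcases Nat.lt_or_ge b (i:ℕ) with hgt | hle
    · rw [if_neg (by omega), if_neg (by omega), if_neg (by omega)] at h2
      exact absurd h2 (lt_irrefl _)
    · have hib : (i:ℕ) = b := by omega
      rw [if_neg (by omega), if_neg (by omega), if_pos (by omega)] at h2
      rw [show φ i = φ bF from congrArg φ (Fin.ext (by omega))] at h2
      exact absurd h2 (lt_irrefl _)
  have hcount : S.card + 1 ≤ max ka k := by
    have hsub : S ⊆ Finset.univ.filter fun i : Fin m => 0 ≤ (i:ℕ) ∧ (i:ℕ) < b := by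
      intro i hi
      simp only [Finset.mem_filter, Finset.mem_univ, true_and]
      exact ⟨Nat.zero_le _, hSsub i hi⟩
    have := Finset.card_le_card hsub
    rw [card_filter_Ico 0 b (by omega), Nat.sub_zero] at this
    have : S.card + 1 ≤ k := by omega
    omega
  exact ⟨a, ⟨ha01, haS⟩, opt, package k ka hm1 φ a pm hcount⟩


private lemma HS_pos (φ : Fin m → ℝ) (hφpos : ∀ i, 0 < φ i) (t : ℕ) (ht : t < m) :
    0 < SIco m t m (fun i => (φ i)⁻¹) := by
  unfold SIco
  apply Finset.sum_pos
  · intro i _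
    exact inv_pos.mpr (hφpos i)
  · exact ⟨⟨t, ht⟩, by simp only [Finset.mem_filter, Finset.mem_univ, true_and, Fin.val_mk]; omega⟩

private lemma waterfill (hm1 : 1 ≤ m) (φ : Fin m → ℝ) (hφpos : ∀ i, 0 < φ i)
    (hφmono : Monotone φ) (ka z : ℕ) (hka : 1 ≤ ka) (hzka : ka + z ≤ m) :
    ∃ c : ℝ, 0 < c ∧ SIco m z m (fun i => min 1 (c / φ i)) = (ka:ℝ) := by
  set g : ℝ → ℝ := fun c => SIco m z m (fun i => min 1 (c / φ i)) with hg
  have hcont : Continuous g := by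
    rw [hg]
    unfold SIco
    apply continuous_finset_sum
    intro i _
    exact continuous_const.min (continuous_id.div_const (φ i))
  set M : ℝ := φ ⟨m-1, by omega⟩ with hM
  have hM0 : 0 ≤ M := (hφpos _).le
  have hg0 : g 0 = 0 := by
    have e : g 0 = SIco m z m (fun _ => (0:ℝ)) := by
      rw [hg]
      apply SIco_congr
      intro i _ _
      rw [zero_div]
      norm_num
    rw [e, SIco_const z m 0 (le_refl m)]
    ring
  have hgM : g M = ((m - z : ℕ):ℝ) := by
    rw [hg]
    simp only []
    rw [show ((m - z : ℕ):ℝ) = SIco m z m (fun _ => (1:ℝ)) by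
      rw [SIco_const z m 1 (le_refl m)]; ring]
    apply SIco_congr
    intro i _ _
    rw [min_eq_left]
    rw [le_div_iff₀ (hφpos i), one_mul]
    exact hφmono (Fin.le_def.mpr (by simp only [Fin.val_mk]; omega))
  have hmem : (ka:ℝ) ∈ Set.Icc (g 0) (g M) := by
    rw [hg0, hgM]
    constructor
    · positivity
    · have : ka ≤ m - z := by omega
      exact_mod_cast this
  have := intermediate_value_Icc hM0 hcont.continuousOn hmem
  obtain ⟨c, hcI, hgc⟩ := this
  refine ⟨c, ?_, hgc⟩
  rcases lt_or_eq_of_le hcI.1 with h | h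
  · exact h
  · exfalso
    rw [← h, hg0] at hgc
    have : (1:ℝ) ≤ (ka:ℝ) := by exact_mod_cast hka
    linarith

private lemma cfg (hm1 : 1 ≤ m) (φ : Fin m → ℝ) (hφpos : ∀ i, 0 < φ i)
    (hφmono : Monotone φ) (ka z : ℕ) (hka : 1 ≤ ka) (hzka : ka + z ≤ m) :
    ∃ (c : ℝ) (w : ℕ), 0 < c ∧ z ≤ w ∧ w ≤ m ∧
      (∀ i : Fin m, z ≤ (i:ℕ) → ((φ i ≤ c) ↔ (i:ℕ) < w)) ∧
      (((w - z : ℕ):ℝ) + c * SIco m w m (fun i => (φ i)⁻¹) = (ka:ℝ)) := by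
  obtain ⟨c, hc, hsum⟩ := waterfill hm1 φ hφpos hφmono ka z hka hzka
  classical
  set R : ℕ → Prop := fun t => z ≤ t ∧ ∀ ht : t < m, c < φ ⟨t, ht⟩ with hR
  have hRm : R m := ⟨by omega, fun ht => absurd ht (lt_irrefl m)⟩
  have hex : ∃ t, R t := ⟨m, hRm⟩
  set w : ℕ := Nat.find hex with hw
  have hspec : R w := Nat.find_spec hex
  have hwm : w ≤ m := Nat.find_min' hex hRm
  have hzw : z ≤ w := hspec.1
  have hiff : ∀ i : Fin m, z ≤ (i:ℕ) → ((φ i ≤ c) ↔ (i:ℕ) < w) := by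
    intro i hzi
    constructor
    · intro hφc
      by_contra hge
      push_neg at hge
      have hwm' : w < m := lt_of_le_of_lt hge i.isLt
      have := hspec.2 hwm'
      have : φ (⟨w, hwm'⟩ : Fin m) ≤ φ i := hφmono (Fin.le_def.mpr (by simp only [Fin.val_mk]; omega))
      linarith [hspec.2 hwm']
    · intro hlt
      have hnR := Nat.find_min hex (show (i:ℕ) < w from hlt)
      rw [hR] at hnR
      by_contra hcon
      push_neg at hcon
      apply hnR
      refine ⟨hzi, fun ht => ?_⟩
      have he : (⟨(i:ℕ), ht⟩ : Fin m) = i := Fin.ext rfl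
      rw [he]
      exact hcon
  refine ⟨c, w, hc, hzw, hwm, hiff, ?_⟩
  rw [← hsum, SIco_split z w m _ hzw hwm]
  have e1 : SIco m z w (fun i => min 1 (c / φ i)) = ((w - z : ℕ):ℝ) := by
    rw [show ((w - z : ℕ):ℝ) = SIco m z w (fun _ => (1:ℝ)) by
      rw [SIco_const z w 1 hwm]; ring]
    apply SIco_congr
    intro i h1 h2
    rw [min_eq_left]
    rw [le_div_iff₀ (hφpos i), one_mul]
    exact (hiff i h1).mpr h2
  have e2 : SIco m w m (fun i => min 1 (c / φ i)) = c * SIco m w m (fun i => (φ i)⁻¹) := by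
    rw [show c * SIco m w m (fun i => (φ i)⁻¹) = SIco m w m (fun i => (φ i)⁻¹ * c) by
      rw [SIco_smul]; ring]
    apply SIco_congr
    intro i h1 _
    have hzi : z ≤ (i:ℕ) := by omega
    have hcφ : c < φ i := by
      by_contra hcon
      push_neg at hcon
      have := (hiff i hzi).mp hcon
      omega
    rw [min_eq_right]
    · rw [div_eq_mul_inv, mul_comm]
    · rw [div_le_one (hφpos i)]
      exact hcφ.le
  rw [e1, e2]

private lemma budget_sum (φ : Fin m → ℝ) (hφpos : ∀ i, 0 < φ i) (ka z w : ℕ) (c : ℝ)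
    (hzw : z ≤ w) (hwm : w ≤ m)
    (hiff : ∀ i : Fin m, z ≤ (i:ℕ) → ((φ i ≤ c) ↔ (i:ℕ) < w))
    (hbud : ((w - z : ℕ):ℝ) + c * SIco m w m (fun i => (φ i)⁻¹) = (ka:ℝ)) :
    SIco m z m (fun i => min 1 (c / φ i)) = (ka:ℝ) := by
  rw [SIco_split z w m _ hzw hwm]
  have e1 : SIco m z w (fun i => min 1 (c / φ i)) = ((w - z : ℕ):ℝ) := by
    rw [show ((w - z : ℕ):ℝ) = SIco m z w (fun _ => (1:ℝ)) by
      rw [SIco_const z w 1 hwm]; ring]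
    apply SIco_congr
    intro i h1 h2
    rw [min_eq_left]
    rw [le_div_iff₀ (hφpos i), one_mul]
    exact (hiff i h1).mpr h2
  have e2 : SIco m w m (fun i => min 1 (c / φ i)) = c * SIco m w m (fun i => (φ i)⁻¹) := by
    rw [show c * SIco m w m (fun i => (φ i)⁻¹) = SIco m w m (fun i => (φ i)⁻¹ * c) by
      rw [SIco_smul]; ring]
    apply SIco_congr
    intro i h1 _
    have hzi : z ≤ (i:ℕ) := by omega
    have hcφ : c < φ i := by
      by_contra hcon
      push_neg at hcon
      have := (hiff i hzi).mp hcon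
      omega
    rw [min_eq_right]
    · rw [div_eq_mul_inv, mul_comm]
    · rw [div_le_one (hφpos i)]
      exact hcφ.le
  rw [e1, e2, hbud]

private lemma hfun_mono (φ : Fin m → ℝ) (hφpos : ∀ i, 0 < φ i) (hφmono : Monotone φ)
    (zv : ℕ) (hzv : zv < m) : ∀ s t : ℕ, zv ≤ s → s ≤ t →
    (s:ℝ) + φ ⟨zv, hzv⟩ * SIco m s m (fun i => (φ i)⁻¹)
      ≤ (t:ℝ) + φ ⟨zv, hzv⟩ * SIco m t m (fun i => (φ i)⁻¹) := by
  intro s t hzs hst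
  induction t with
  | zero =>
    have : s = 0 := by omega
    subst this
    exact le_refl _
  | succ n ih =>
    rcases Nat.lt_or_ge s (n+1) with hlt | hge
    · have hsn : s ≤ n := by omega
      have step : (n:ℝ) + φ ⟨zv, hzv⟩ * SIco m n m (fun i => (φ i)⁻¹)
          ≤ ((n+1 : ℕ):ℝ) + φ ⟨zv, hzv⟩ * SIco m (n+1) m (fun i => (φ i)⁻¹) := by
        rcases Nat.lt_or_ge n m with hnm | hnm
        · rw [SIco_step n m hnm (by omega)]
          have h1 : φ ⟨zv, hzv⟩ ≤ φ ⟨n, hnm⟩ :=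
            hφmono (Fin.le_def.mpr (by simp only [Fin.val_mk]; omega))
          have h2 : φ ⟨zv, hzv⟩ * (φ ⟨n, hnm⟩)⁻¹ ≤ 1 := by
            rw [← div_eq_mul_inv, div_le_one (hφpos _)]
            exact h1
          push_cast
          nlinarith [hφpos (⟨n, hnm⟩ : Fin m)]
        · rw [SIco_empty n m _ hnm, SIco_empty (n+1) m _ (by omega)]
          push_cast
          linarith
      exact le_trans (ih hsn) step
    · have : s = n+1 := by omega
      subst this
      exact le_refl _


private lemma scan_done (k ka : ℕ) (hm1 : 1 ≤ m) (hkm : k < m) (hka1 : 1 ≤ ka)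
    (φ : Fin m → ℝ) (hφpos : ∀ i, 0 < φ i) (hφmono : Monotone φ)
    (hne : ((Finset.univ : Finset (Fin m)).powersetCard k).Nonempty)
    (z w : ℕ) (c : ℝ) (hzm : z < m) (hc : 0 < c) (hzw : z ≤ w) (hwm : w ≤ m)
    (hiff : ∀ i : Fin m, z ≤ (i:ℕ) → ((φ i ≤ c) ↔ (i:ℕ) < w))
    (hbud : ((w - z : ℕ):ℝ) + c * SIco m w m (fun i => (φ i)⁻¹) = (ka:ℝ))
    (hinv : z = 0 ∨ (0 < z ∧ ∃ hz1 : z - 1 < m,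
      ((w:ℝ) + φ ⟨z-1, hz1⟩ * SIco m w m (fun i => (φ i)⁻¹) < (k:ℝ))))
    (hD : (k:ℝ) ≤ (w:ℝ) + φ ⟨z, hzm⟩ * SIco m w m (fun i => (φ i)⁻¹)) :
    GoalProp m k ka φ hne := by
  by_cases hwk : w ≤ k
  · -- regime A0
    have hwm' : w < m := by omega
    have hHpos : 0 < SIco m w m (fun i => (φ i)⁻¹) := HS_pos φ hφpos w hwm'
    set θ : ℝ := ((k:ℝ) - w) / SIco m w m (fun i => (φ i)⁻¹) with hθ
    have hθ0 : 0 ≤ θ := by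
      apply div_nonneg _ hHpos.le
      have : (w:ℝ) ≤ (k:ℝ) := by exact_mod_cast hwk
      linarith
    have hμs : (w:ℝ) + θ * SIco m w m (fun i => (φ i)⁻¹) = (k:ℝ) := by
      rw [hθ, div_mul_cancel₀ _ hHpos.ne']
      ring
    have hθφz : θ ≤ φ ⟨z, hzm⟩ := by
      rw [hθ, div_le_iff₀ hHpos]
      linarith [hD]
    have hθφ : ∀ i : Fin m, z ≤ (i:ℕ) → θ ≤ φ i := by
      intro i hi
      exact le_trans hθφz (hφmono (Fin.le_def.mpr (by simp only [Fin.val_mk]; omega)))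
    have hzθ : ∀ i : Fin m, (i:ℕ) < z → φ i ≤ θ := by
      intro i hi
      rcases hinv with h0 | ⟨hzpos, hz1, hlt⟩
      · omega
      · have h1 : φ ⟨z-1, hz1⟩ < θ := by
          rw [hθ, lt_div_iff₀ hHpos]
          linarith [hlt]
        have h2 : φ i ≤ φ ⟨z-1, hz1⟩ :=
          hφmono (Fin.le_def.mpr (by simp only [Fin.val_mk]; omega))
        linarith
    exact configA0 k ka hm1 hkm hka1 φ hφpos hφmono hne z w c θ hzw hwk hc hθ0 hiff hbud hzθ hθφ hμs
  · -- regime B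
    push_neg at hwk
    have hz0 : z = 0 := by
      rcases hinv with h0 | ⟨hzpos, hz1, hlt⟩
      · exact h0
      · exfalso
        have hH0 : 0 ≤ SIco m w m (fun i => (φ i)⁻¹) :=
          SIco_nonneg _ _ _ (fun i => (inv_pos.mpr (hφpos i)).le)
        have hφ0 : 0 < φ ⟨z-1, hz1⟩ := hφpos _
        have : (w:ℝ) < (k:ℝ) := by nlinarith [hlt]
        have : w < k := by exact_mod_cast this
        omega
    subst hz0
    have hcov : ∀ i : Fin m, (i:ℕ) < k → φ i ≤ c := by
      intro i hik
      exact (hiff i (Nat.zero_le _)).mpr (by omega)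
    have hbudB : ∑ i, min 1 (c / φ i) = (ka:ℝ) := by
      rw [← SIco_univ]
      exact budget_sum φ hφpos ka 0 w c (Nat.zero_le _) hwm hiff hbud
    exact configB k ka hm1 hkm.le hka1 φ hφpos hφmono hne c hc hcov hbudB


set_option maxHeartbeats 1000000 in
private lemma scan (k ka : ℕ) (hm1 : 1 ≤ m) (hkm : k < m) (hka1 : 1 ≤ ka) (hkam : ka ≤ m)
    (φ : Fin m → ℝ) (hφpos : ∀ i, 0 < φ i) (hφmono : Monotone φ)
    (hne : ((Finset.univ : Finset (Fin m)).powersetCard k).Nonempty) :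
    ∀ d z (c : ℝ) w, m = ka + z + d → 0 < c → z ≤ w → w ≤ m →
      (∀ i : Fin m, z ≤ (i:ℕ) → ((φ i ≤ c) ↔ (i:ℕ) < w)) →
      (((w - z : ℕ):ℝ) + c * SIco m w m (fun i => (φ i)⁻¹) = (ka:ℝ)) →
      (z = 0 ∨ (0 < z ∧ ∃ hz1 : z - 1 < m,
        ((w:ℝ) + φ ⟨z-1, hz1⟩ * SIco m w m (fun i => (φ i)⁻¹) < (k:ℝ)))) →
      GoalProp m k ka φ hne := by
  intro d
  induction d with
  | zero =>
    intro z c w hd hc hzw hwm hiff hbud hinv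
    have hzm : z < m := by omega
    by_cases hD : (k:ℝ) ≤ (w:ℝ) + φ ⟨z, hzm⟩ * SIco m w m (fun i => (φ i)⁻¹)
    · exact scan_done k ka hm1 hkm hka1 φ hφpos hφmono hne z w c hzm hc hzw hwm hiff hbud hinv hD
    · exfalso
      have hwm' : w = m := by
        by_contra hne'
        have hwlt : w < m := by omega
        have hcast1 : ((w - z : ℕ):ℝ) = (w:ℝ) - z := Nat.cast_sub hzw
        have h1 : c * SIco m w m (fun i => (φ i)⁻¹) = ((m - w : ℕ):ℝ) := by
          have hcast2 : ((m - w : ℕ):ℝ) = (m:ℝ) - w := Nat.cast_sub hwm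
          have hmz : (ka:ℝ) = (m:ℝ) - z := by
            have : m = ka + z := by omega
            rw [this]; push_cast; ring
          rw [hcast2]
          rw [hcast1, hmz] at hbud
          linarith
        have h2 : c * SIco m w m (fun i => (φ i)⁻¹) < ((m - w : ℕ):ℝ) := by
          have e : c * SIco m w m (fun i => (φ i)⁻¹) = SIco m w m (fun i => (φ i)⁻¹ * c) := by
            rw [SIco_smul]; ring
          rw [e]
          unfold SIco
          have hcard : ((m - w : ℕ):ℝ)
              = ∑ _i ∈ Finset.univ.filter (fun i : Fin m => w ≤ (i:ℕ) ∧ (i:ℕ) < m), (1:ℝ) := by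
            rw [Finset.sum_const, card_filter_Ico w m (le_refl m), nsmul_eq_mul, mul_one]
          rw [hcard]
          apply Finset.sum_lt_sum_of_nonempty
          · refine ⟨⟨w, hwlt⟩, ?_⟩
            simp only [Finset.mem_filter, Finset.mem_univ, true_and, Fin.val_mk]
            omega
          · intro i hi
            simp only [Finset.mem_filter, Finset.mem_univ, true_and] at hi
            have hcφ : c < φ i := by
              by_contra hcon
              push_neg at hcon
              have := (hiff i (by omega)).mp hcon
              omega
            rw [← div_eq_inv_mul]
            rw [div_lt_one (hφpos i)]
            exact hcφ
        linarith
      apply hD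
      have h0 : SIco m w m (fun i => (φ i)⁻¹) = 0 := SIco_empty w m _ (by omega)
      rw [h0, mul_zero, add_zero]
      have : k ≤ w := by omega
      exact_mod_cast this
  | succ d' IH =>
    intro z c w hd hc hzw hwm hiff hbud hinv
    have hzm : z < m := by omega
    by_cases hD : (k:ℝ) ≤ (w:ℝ) + φ ⟨z, hzm⟩ * SIco m w m (fun i => (φ i)⁻¹)
    · exact scan_done k ka hm1 hkm hka1 φ hφpos hφmono hne z w c hzm hc hzw hwm hiff hbud hinv hD
    · push_neg at hD
      obtain ⟨c', w', hc', hzw', hw'm, hiff', hbud'⟩ :=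
        cfg hm1 φ hφpos hφmono ka (z+1) hka1 (by omega)
      by_cases hD' : (k:ℝ) ≤ (w':ℝ) + φ ⟨z, hzm⟩ * SIco m w' m (fun i => (φ i)⁻¹)
      · -- bridge: regime A1
        have hlow : ((z:ℝ) + 1) + φ ⟨z, hzm⟩ * SIco m (z+1) m (fun i => (φ i)⁻¹) < (k:ℝ) := by
          rcases Nat.lt_or_ge z w with h | h
          · have hmono' := hfun_mono φ hφpos hφmono z hzm (z+1) w (by omega) (by omega)
            push_cast at hmono'
            linarith
          · have hwz' : w = z := by omega
            rw [hwz'] at hD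
            rw [SIco_step z m hzm (by omega)] at hD
            have : φ ⟨z, hzm⟩ * ((φ ⟨z, hzm⟩)⁻¹ + SIco m (z+1) m (fun i => (φ i)⁻¹))
                = 1 + φ ⟨z, hzm⟩ * SIco m (z+1) m (fun i => (φ i)⁻¹) := by
              rw [mul_add, mul_inv_cancel₀ (hφpos _).ne']
            rw [this] at hD
            linarith
        classical
        set P : ℕ → Prop := fun t => z+1 ≤ t ∧
          (k:ℝ) ≤ ((t:ℝ)+1) + φ ⟨z, hzm⟩ * SIco m (t+1) m (fun i => (φ i)⁻¹) with hP
        have hw'z2 : z+2 ≤ w' := by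
          by_contra h
          have hw'e : w' = z+1 := by omega
          rw [hw'e] at hD'
          push_cast at hD'
          linarith
        have hPw' : P (w'-1) := by
          constructor
          · omega
          · have h1 : w' - 1 + 1 = w' := by omega
            rw [h1]
            have h2 : ((w' - 1 : ℕ):ℝ) = (w':ℝ) - 1 := by
              rw [Nat.cast_sub (by omega : 1 ≤ w')]
              norm_num
            rw [h2]
            linarith
        have hexP : ∃ t, P t := ⟨w'-1, hPw'⟩
        have hPb' : P (Nat.find hexP) := Nat.find_spec hexP
        have hbw'' : Nat.find hexP ≤ w' - 1 := Nat.find_min' hexP hPw'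
        have hminP : ∀ t, z+1 ≤ t → t < Nat.find hexP →
            ((t:ℝ)+1) + φ ⟨z, hzm⟩ * SIco m (t+1) m (fun i => (φ i)⁻¹) < (k:ℝ) := by
          intro t h1 h2
          have hnP := Nat.find_min hexP h2
          simp only [hP] at hnP
          push_neg at hnP
          exact hnP h1
        set b := Nat.find hexP with hb
        have hbz : z+1 ≤ b := hPb'.1
        have hkb1 : (k:ℝ) ≤ ((b:ℝ)+1) + φ ⟨z, hzm⟩ * SIco m (b+1) m (fun i => (φ i)⁻¹) := hPb'.2
        have hbw' : b < w' := by omega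
        have hbm : b < m := by omega
        have hhzb : (b:ℝ) + φ ⟨z, hzm⟩ * SIco m b m (fun i => (φ i)⁻¹) < (k:ℝ) := by
          rcases Nat.lt_or_ge (z+1) b with h | h
          · have hlt := hminP (b-1) (by omega) (by omega)
            have hb1 : b - 1 + 1 = b := by omega
            rw [hb1] at hlt
            have hcast : ((b - 1 : ℕ):ℝ) = (b:ℝ) - 1 := by
              rw [Nat.cast_sub (by omega : 1 ≤ b)]
              norm_num
            rw [hcast] at hlt
            linarith
          · have hbe : b = z+1 := by omega
            rw [hbe]
            push_cast
            push_cast at hlow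
            linarith
        have hwb : w ≤ b := by
          by_contra h
          push_neg at h
          have hmono' := hfun_mono φ hφpos hφmono z hzm (b+1) w (by omega) (by omega)
          push_cast at hmono'
          linarith
        have hφbc' : φ ⟨b, hbm⟩ ≤ c' := (hiff' ⟨b, hbm⟩ hbz).mpr hbw'
        have hcφb : c < φ ⟨b, hbm⟩ := by
          by_contra hcon
          push_neg at hcon
          have := (hiff ⟨b, hbm⟩ (by simp only [Fin.val_mk]; omega)).mp hcon
          simp only [Fin.val_mk] at this
          omega
        have hSbsplit : SIco m b m (fun i => (φ i)⁻¹)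
            = (φ ⟨b, hbm⟩)⁻¹ + SIco m (b+1) m (fun i => (φ i)⁻¹) :=
          SIco_step b m hbm (by omega) _
        have hμbl : φ ⟨z, hzm⟩ / φ ⟨b, hbm⟩
            ≤ (k:ℝ) - b - φ ⟨z, hzm⟩ * SIco m (b+1) m (fun i => (φ i)⁻¹) := by
          rw [div_eq_mul_inv]
          rw [hSbsplit, mul_add] at hhzb
          linarith
        have hμbu : (k:ℝ) - b - φ ⟨z, hzm⟩ * SIco m (b+1) m (fun i => (φ i)⁻¹) ≤ 1 := by
          linarith
        have hbk : b < k := by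
          have hpos : 0 < φ ⟨z, hzm⟩ * SIco m b m (fun i => (φ i)⁻¹) :=
            mul_pos (hφpos _) (HS_pos φ hφpos b hbm)
          have : (b:ℝ) < k := by linarith
          exact_mod_cast this
        -- budget window for x
        have hUval : SIco m (z+1) m (fun i => min 1 (φ ⟨b, hbm⟩ / φ i))
            = ((b - z : ℕ):ℝ) + φ ⟨b, hbm⟩ * SIco m (b+1) m (fun i => (φ i)⁻¹) := by
          rw [SIco_split (z+1) (b+1) m _ (by omega) (by omega)]
          have e1 : SIco m (z+1) (b+1) (fun i => min 1 (φ ⟨b, hbm⟩ / φ i)) = ((b - z : ℕ):ℝ) := by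
            rw [show ((b - z : ℕ):ℝ) = SIco m (z+1) (b+1) (fun _ => (1:ℝ)) by
              rw [SIco_const (z+1) (b+1) 1 (by omega)]
              rw [show (b+1) - (z+1) = b - z by omega]; ring]
            apply SIco_congr
            intro i h1 h2
            rw [min_eq_left]
            rw [le_div_iff₀ (hφpos i), one_mul]
            exact hφmono (Fin.le_def.mpr (by simp only [Fin.val_mk]; omega))
          have e2 : SIco m (b+1) m (fun i => min 1 (φ ⟨b, hbm⟩ / φ i))
              = φ ⟨b, hbm⟩ * SIco m (b+1) m (fun i => (φ i)⁻¹) := by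
            rw [show φ ⟨b, hbm⟩ * SIco m (b+1) m (fun i => (φ i)⁻¹)
                = SIco m (b+1) m (fun i => (φ i)⁻¹ * φ ⟨b, hbm⟩) by rw [SIco_smul]; ring]
            apply SIco_congr
            intro i h1 _
            rw [min_eq_right]
            · rw [div_eq_mul_inv, mul_comm]
            · rw [div_le_one (hφpos i)]
              exact hφmono (Fin.le_def.mpr (by simp only [Fin.val_mk]; omega))
          rw [e1, e2]
        have hsum' : SIco m (z+1) m (fun i => min 1 (c' / φ i)) = (ka:ℝ) :=
          budget_sum φ hφpos ka (z+1) w' c' hzw' hw'm hiff' hbud'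
        have hUup : SIco m (z+1) m (fun i => min 1 (φ ⟨b, hbm⟩ / φ i)) ≤ (ka:ℝ) := by
          rw [← hsum']
          apply SIco_mono
          intro i _ _
          apply min_le_min (le_refl 1)
          exact (div_le_div_iff_of_pos_right (hφpos i)).mpr hφbc'
        have hsumz : SIco m z m (fun i => min 1 (c / φ i)) = (ka:ℝ) :=
          budget_sum φ hφpos ka z w c hzw hwm hiff hbud
        have hstepz : SIco m z m (fun i => min 1 (c / φ i))
            = min 1 (c / φ ⟨z, hzm⟩) + SIco m (z+1) m (fun i => min 1 (c / φ i)) :=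
          SIco_step z m hzm (by omega) _
        have hUlow : (ka:ℝ) - 1 ≤ SIco m (z+1) m (fun i => min 1 (φ ⟨b, hbm⟩ / φ i)) := by
          have hmono2 : SIco m (z+1) m (fun i => min 1 (c / φ i))
              ≤ SIco m (z+1) m (fun i => min 1 (φ ⟨b, hbm⟩ / φ i)) := by
            apply SIco_mono
            intro i _ _
            apply min_le_min (le_refl 1)
            exact (div_le_div_iff_of_pos_right (hφpos i)).mpr hcφb.le
          have hmin1 : min 1 (c / φ ⟨z, hzm⟩) ≤ 1 := min_le_left _ _
          rw [hsumz] at hstepz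
          linarith
        set x : ℝ := (ka:ℝ) - ((b - z : ℕ):ℝ) - φ ⟨b, hbm⟩ * SIco m (b+1) m (fun i => (φ i)⁻¹)
          with hx
        have hx0 : 0 ≤ x := by
          rw [hx]
          rw [hUval] at hUup
          linarith
        have hx1 : x ≤ 1 := by
          rw [hx]
          rw [hUval] at hUlow
          linarith
        have hbud'' : x + ((b - z : ℕ):ℝ)
            + φ ⟨b, hbm⟩ * SIco m (b+1) m (fun i => (φ i)⁻¹) = (ka:ℝ) := by
          rw [hx]; ring
        exact configA1 k ka hm1 hkm hka1 φ hφpos hφmono hne z b x (by omega) hbk hzm hbm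
          hx0 hx1 hbud'' hμbl hμbu
      · -- recurse
        push_neg at hD'
        apply IH (z+1) c' w' (by omega) hc' hzw' hw'm hiff' hbud'
        right
        exact ⟨by omega, ⟨hzm, hD'⟩⟩

end part2

/-- There is a maximizer `a` of `f` over `F` and indices `s, r` with
`1 ≤ s ≤ max(k_a, m − k_d)`, `0 ≤ r ≤ s − 1`, such that (with paper index `j+1` for `j : Fin m`)
`a_m φ_m = ⋯ = a_s φ_s > a_{s−1} φ_{s−1} ≥ ⋯ ≥ a_{s−r} φ_{s−r}` and
`a_{s−r−1} = ⋯ = a_1 = 0`. -/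
theorem stmt_6 (m ka kd : ℕ) (hm : 1 ≤ m) (hka : 1 ≤ ka ∧ ka ≤ m) (hkd : 1 ≤ kd ∧ kd ≤ m)
    (φ : Fin m → ℝ) (hφpos : ∀ i, 0 < φ i) (hφmono : Monotone φ)
    (F : Set (Fin m → ℝ))
    (hF : F = {α | (∀ i, 0 ≤ α i ∧ α i ≤ 1) ∧ ∑ i, α i = (ka : ℝ)})
    (hne : ((Finset.univ : Finset (Fin m)).powersetCard (m - kd)).Nonempty)
    (f : (Fin m → ℝ) → ℝ)
    (hf : f = fun α => (Finset.univ.powersetCard (m - kd)).inf' hne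
      (fun T => ∑ l ∈ T, α l * φ l)) :
    ∃ a ∈ F, (∀ α ∈ F, f α ≤ f a) ∧
      ∃ s r : ℕ, 1 ≤ s ∧ s ≤ max ka (m - kd) ∧ r ≤ s - 1 ∧
        (∀ i j : Fin m, s ≤ (j : ℕ) + 1 → j ≤ i → a i * φ i = a j * φ j) ∧
        (∀ i j : Fin m, s - r ≤ (j : ℕ) + 1 → j ≤ i → (i : ℕ) + 1 ≤ s - 1 →
          a j * φ j ≤ a i * φ i) ∧
        (∀ i t : Fin m, (i : ℕ) + 1 < s → s ≤ (t : ℕ) + 1 → a i * φ i < a t * φ t) ∧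
        (∀ i : Fin m, (i : ℕ) + 1 < s - r → a i = 0) := by
  subst hF hf
  have hkm : m - kd < m := by omega
  obtain ⟨c, w, hc, hzw, hwm, hiff, hbud⟩ :=
    cfg hm φ hφpos hφmono ka 0 hka.1 (by omega)
  have hgoal : GoalProp m (m - kd) ka φ hne :=
    scan (m - kd) ka hm hkm hka.1 hka.2 φ hφpos hφmono hne (m - ka) 0 c w
      (by omega) hc hzw hwm hiff hbud (Or.inl rfl)
  obtain ⟨a, ⟨ha01, haS⟩, hopt, hstruct⟩ := hgoal
  refine ⟨a, ⟨ha01, haS⟩, ?_, hstruct⟩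
  intro α hα
  exact hopt α hα
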